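/- The iterative Metropolized Gibbs kernel satisfies detailed balance with respect to π: P^{IMG}_{ij} π_j = P^{IMG}_{ji} π_i for all states i, j. -/

import Mathlib

/-- `imgS w j = ∑_{k < j} y_k`, the partial sums of the `y`-sequence of the
iterative Metropolized Gibbs sampler built from the (`0`-indexed) weight
sequence `w`. -/
noncomputable def imgS (w : ℕ → ℝ) : ℕ → ℝ
  | 0 => 0
  | j + 1 =>
      imgS w j +
        (if j = 0 then w 0 / (1 - w 0)
         else w j * (1 - imgS w j) / (1 - ∑ k ∈ Finset.range (j + 1), w k))

/-- The `y`-sequence of the iterative Metropolized Gibbs sampler: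
`y 0 = w 0 / (1 - w 0)` and, for `j > 0`,
`y j = w j * (1 - ∑_{k < j} y k) / (1 - ∑_{k ≤ j} w k)`. -/
noncomputable def imgY (w : ℕ → ℝ) (j : ℕ) : ℝ :=
  if j = 0 then w 0 / (1 - w 0)
  else w j * (1 - imgS w j) / (1 - ∑ k ∈ Finset.range (j + 1), w k)

/-- The iterative Metropolized Gibbs kernel: `PIMG π i j` is the transition
probability from state `j` to state `i` (states `0`-indexed, ordered by
increasing weight).  `PIMG π i j = y i` for `i < j`, `(π i / π j) * y j` for
`i > j`, `1 - ∑_{k < n - 1} y k` at the last diagonal entry, and `0` on the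
remaining diagonal entries. -/
noncomputable def PIMG {n : ℕ} (π : Fin n → ℝ) (i j : Fin n) : ℝ :=
  let w : ℕ → ℝ := fun k => if h : k < n then π ⟨k, h⟩ else 0
  if (i : ℕ) < (j : ℕ) then imgY w i
  else if (j : ℕ) < (i : ℕ) then (π i / π j) * imgY w j
  else if (i : ℕ) = n - 1 then 1 - ∑ k ∈ Finset.range (n - 1), imgY w k
  else 0

/-- the iterative Metropolized Gibbs kernel satisfies detailed
balance with respect to `π`. -/
theorem PIMG_detailed_balance {n : ℕ} (hn : 2 ≤ n) (π : Fin n → ℝ)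
    (hpos : ∀ i, 0 < π i) (hsum : ∑ i, π i = 1) (hmono : Monotone π)
    (hlt : ∀ i, π i < 1) :
    ∀ i j, PIMG π i j * π j = PIMG π j i * π i := by
  intro i j
  unfold PIMG
  rcases lt_trichotomy (i : ℕ) (j : ℕ) with h | h | h
  · simp only [if_pos h, if_neg (lt_asymm h), if_neg (not_lt.mpr h.le)]
    field_simp [(hpos i).ne', (hpos j).ne']
  · simp [h, Fin.ext (by exact h : (i : ℕ) = (j : ℕ))]
  · simp only [if_pos h, if_neg (lt_asymm h), if_neg (not_lt.mpr h.le)]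
    field_simp [(hpos i).ne', (hpos j).ne']
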